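/- Let T be a nonnegative continuous survival time with conditional survival function S^C(t | x) = exp(-∫_0^t λ^C(s | x) ds) where λ^C(s | x) = λ_0^C(s) exp(βᵀx) is a Cox proportional hazards model. For a partition 0 = t_0 < t_1 < t_2 < ..., define the grouped discrete hazard λ_j(x) = P(T ≤ t_j | T > t_{j-1}, X = x). Then -log(1 - λ_j(x)) = -log(1 - λ_{0j}) · exp(βᵀx), where λ_{0j} = 1 - exp(-∫_{t_{j-1}}^{t_j} λ_0^C(s) ds). That is, the grouped data follow a discrete-time proportional hazards model under the complementary log transformation with the same regression coefficient β. -/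
import Mathlib


open MeasureTheory

/-- Grouping a continuous-time Cox model: if `P(T > t | x) = exp(-e^{βᵀx} ∫_0^t λ₀)`,
then the grouped discrete hazard `λ_j(x) = P(T ≤ t_j | T > t_{j-1}, x)` satisfies
`-log(1 - λ_j(x)) = -log(1 - λ_{0j}) · e^{βᵀx}` with
`λ_{0j} = 1 - exp(-∫_{t_{j-1}}^{t_j} λ₀)`. -/
theorem grouped_cox_cloglog {Ω : Type*} [MeasurableSpace Ω]
    (μ : Measure Ω) [IsProbabilityMeasure μ] (T : Ω → ℝ) (hT : Measurable T)
    {d : ℕ} (β x : Fin d → ℝ) (lam0 : ℝ → ℝ) (hlam0 : ∀ s, 0 ≤ lam0 s)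
    (hint : ∀ a b : ℝ, IntervalIntegrable lam0 volume a b)
    (hS : ∀ t : ℝ,
      (μ {ω | t < T ω}).toReal =
        Real.exp (-(Real.exp (∑ i, β i * x i) * ∫ s in (0:ℝ)..t, lam0 s)))
    (tprev tcur : ℝ) (h0 : 0 ≤ tprev) (htt : tprev < tcur)
    (hppos : 0 < ∫ s in tprev..tcur, lam0 s) :
    -Real.log (1 -
        (μ {ω | tprev < T ω ∧ T ω ≤ tcur}).toReal / (μ {ω | tprev < T ω}).toReal) =
      -Real.log (1 - (1 - Real.exp (-∫ s in tprev..tcur, lam0 s))) *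
        Real.exp (∑ i, β i * x i) := by
  set E := Real.exp (∑ i, β i * x i) with hE
  have hEpos : 0 < E := Real.exp_pos _
  set I := ∫ s in tprev..tcur, lam0 s with hI
  have hSprev := hS tprev
  have hScur := hS tcur
  have hadd : (∫ s in (0:ℝ)..tprev, lam0 s) + I = ∫ s in (0:ℝ)..tcur, lam0 s :=
    intervalIntegral.integral_add_adjacent_intervals (hint 0 tprev) (hint tprev tcur)
  -- measure additivity
  have hmeasA : MeasurableSet {ω | tprev < T ω ∧ T ω ≤ tcur} :=
    (measurableSet_lt measurable_const hT).inter (measurableSet_le hT measurable_const)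
  have hmeasB : MeasurableSet {ω | tcur < T ω} := measurableSet_lt measurable_const hT
  have hunion : {ω | tprev < T ω ∧ T ω ≤ tcur} ∪ {ω | tcur < T ω} = {ω | tprev < T ω} := by
    ext ω
    simp only [Set.mem_union, Set.mem_setOf_eq]
    constructor
    · rintro (⟨h1, _⟩ | h1)
      · exact h1
      · exact htt.trans h1
    · intro h1
      rcases le_or_gt (T ω) tcur with h2 | h2
      · exact Or.inl ⟨h1, h2⟩
      · exact Or.inr h2
  have hdisj : Disjoint {ω | tprev < T ω ∧ T ω ≤ tcur} {ω | tcur < T ω} := by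
    rw [Set.disjoint_left]
    rintro ω ⟨_, h2⟩ h3
    exact absurd h3 (not_lt.mpr h2)
  have hsum : μ {ω | tprev < T ω ∧ T ω ≤ tcur} + μ {ω | tcur < T ω}
      = μ {ω | tprev < T ω} := by
    rw [← measure_union hdisj hmeasB, hunion]
  have hfin1 : μ {ω | tprev < T ω ∧ T ω ≤ tcur} ≠ ⊤ := measure_ne_top μ _
  have hfin2 : μ {ω | tcur < T ω} ≠ ⊤ := measure_ne_top μ _
  have hsumR : (μ {ω | tprev < T ω ∧ T ω ≤ tcur}).toReal
      = (μ {ω | tprev < T ω}).toReal - (μ {ω | tcur < T ω}).toReal := by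
    rw [← hsum, ENNReal.toReal_add hfin1 hfin2]; ring
  have hSprevpos : (0:ℝ) < (μ {ω | tprev < T ω}).toReal := by
    rw [hSprev]; exact Real.exp_pos _
  have hratio : (μ {ω | tprev < T ω ∧ T ω ≤ tcur}).toReal / (μ {ω | tprev < T ω}).toReal
      = 1 - Real.exp (-(E * I)) := by
    rw [hsumR, sub_div, div_self hSprevpos.ne', hSprev, hScur, ← Real.exp_sub]
    rw [← hadd]
    ring_nf
  rw [hratio]
  have h1 : 1 - (1 - Real.exp (-(E * I))) = Real.exp (-(E * I)) := by ring
  have h2 : 1 - (1 - Real.exp (-I)) = Real.exp (-I) := by ring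
  rw [h1, h2, Real.log_exp, Real.log_exp]
  ring
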